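/- (Lemma 3.1.) In the multistage setup, suppose v̂_t is convex on Z_t for every t = 0,…,K, and let π̂ = (π̂_0,…,π̂_{K−1}) be such that for every t and every x ∈ Z_t there exists γ ∈ Δ^N making (π̂_t(x), γ) an optimal solution of the minimization problem defining (T̂_t v̂_{t+1})(x) (in particular π̂_t(x) ∈ U(x)). Then the policy cost satisfies v^π̂_t(x) ≤ v̂_t(x) for all x ∈ Z_t and all t = 0,…,K. -/

import Mathlib

open scoped BigOperators


lemma jensen_zero_outside {E : Type*} [AddCommGroup E] [Module ℝ E] {M : ℕ}
    {S : Set E} {g : E → ℝ} (hg : ConvexOn ℝ S g)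
    (w : Fin M → ℝ) (hw : w ∈ stdSimplex ℝ (Fin M))
    (z : Fin M → E) (hz : ∀ i, w i ≠ 0 → z i ∈ S) :
    g (∑ i, w i • z i) ≤ ∑ i, w i * g (z i) := by
  classical
  set t := Finset.univ.filter (fun i => w i ≠ 0) with ht
  have hsum1 : ∑ i ∈ t, w i = 1 := by
    rw [Finset.sum_subset (Finset.subset_univ t) (fun i _ hi => by
      simp only [ht, Finset.mem_filter, Finset.mem_univ, true_and, not_not] at hi
      exact hi)]
    exact hw.2
  have hzero : ∀ i ∈ Finset.univ, i ∉ t → w i = 0 := fun i _ hi => by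
    simp only [ht, Finset.mem_filter, Finset.mem_univ, true_and, not_not] at hi
    exact hi
  have hpt : (∑ i, w i • z i) = ∑ i ∈ t, w i • z i :=
    (Finset.sum_subset (Finset.subset_univ t)
      (fun i h1 h2 => by rw [hzero i h1 h2, zero_smul])).symm
  have hgsum : (∑ i, w i * g (z i)) = ∑ i ∈ t, w i * g (z i) :=
    (Finset.sum_subset (Finset.subset_univ t)
      (fun i h1 h2 => by rw [hzero i h1 h2, zero_mul])).symm
  rw [hpt, hgsum]
  exact hg.map_sum_le (fun i _ => hw.1 i) hsum1
    (fun i hi => hz i (Finset.mem_filter.mp hi).2)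

/-- Lemma 3.1: the policy cost of the greedy policy is dominated by the
approximate value function, provided the latter is convex. -/
theorem stmt_4 {n m N M J K : ℕ}
    (U : EuclideanSpace ℝ (Fin n) → Set (EuclideanSpace ℝ (Fin m)))
    (r : EuclideanSpace ℝ (Fin n) → EuclideanSpace ℝ (Fin m) → ℝ)
    (f : EuclideanSpace ℝ (Fin n) → EuclideanSpace ℝ (Fin m) → Fin N → EuclideanSpace ℝ (Fin n))
    (p : Fin N → ℝ) (hp : ∀ s, 0 ≤ p s) (hpsum : ∑ s, p s = 1)
    (node : Fin M → EuclideanSpace ℝ (Fin n))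
    (cell : Fin J → Set (Fin M))
    (δ : ℝ)
    (hδ : ∀ j : Fin J, ∀ i ∈ cell j, ∀ k ∈ cell j, ‖node i - node k‖ ≤ δ)
    (Z : ℕ → Set (EuclideanSpace ℝ (Fin n)))
    (hZconv : ∀ t ≤ K, Convex ℝ (Z t))
    (hZcpt : ∀ t ≤ K, IsCompact (Z t))
    (hZmono : ∀ t, t < K → Z t ⊆ Z (t + 1))
    (hUne : ∀ t ≤ K, ∀ x ∈ Z t, (U x).Nonempty)
    (hfZ : ∀ t < K, ∀ x ∈ Z t, ∀ u ∈ U x, ∀ s, f x u s ∈ Z (t + 1))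
    (q : EuclideanSpace ℝ (Fin n) → ℝ)
    (hZcells : ∀ t ≤ K, Z t =
      ⋃ j ∈ {j : Fin J | convexHull ℝ (node '' cell j) ⊆ Z t}, convexHull ℝ (node '' cell j))
    (vhat : ℕ → EuclideanSpace ℝ (Fin n) → ℝ)
    (hvhatK : ∀ x ∈ Z K, vhat K x = q x)
    (hvhat : ∀ t < K, ∀ x ∈ Z t, IsLeast
      {z : ℝ | ∃ u ∈ U x, ∃ γ : Fin N → Fin M → ℝ,
        (∀ s, γ s ∈ stdSimplex ℝ (Fin M)) ∧
        (∀ s i, node i ∉ Z (t + 1) → γ s i = 0) ∧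
        (∀ s, f x u s = ∑ i, γ s i • node i) ∧
        z = r x u + ∑ s, ∑ i, p s * γ s i * vhat (t + 1) (node i)} (vhat t x))
    (hvhatconv : ∀ t ≤ K, ConvexOn ℝ (Z t) (vhat t))
    (pol : ℕ → EuclideanSpace ℝ (Fin n) → EuclideanSpace ℝ (Fin m))
    (hpolU : ∀ t < K, ∀ x ∈ Z t, pol t x ∈ U x)
    (vpi : ℕ → EuclideanSpace ℝ (Fin n) → ℝ)
    (hvpiK : ∀ x ∈ Z K, vpi K x = q x)
    (hvpi : ∀ t < K, ∀ x ∈ Z t,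
      vpi t x = r x (pol t x) + ∑ s, p s * vpi (t + 1) (f x (pol t x) s))
    (hpolopt : ∀ t < K, ∀ x ∈ Z t, ∃ γ : Fin N → Fin M → ℝ,
        pol t x ∈ U x ∧
        (∀ s, γ s ∈ stdSimplex ℝ (Fin M)) ∧
        (∀ s i, node i ∉ Z (t + 1) → γ s i = 0) ∧
        (∀ s, f x (pol t x) s = ∑ i, γ s i • node i) ∧
        vhat t x = r x (pol t x) + ∑ s, ∑ i, p s * γ s i * vhat (t + 1) (node i))
 :
    ∀ t ≤ K, ∀ x ∈ Z t, vpi t x ≤ vhat t x := by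

  intro t ht
  induction' hK : K - t with d ih generalizing t
  · have htK : t = K := by omega
    subst htK
    intro x hx
    rw [hvpiK x hx, hvhatK x hx]
  · have htK : t < K := by omega
    intro x hx
    obtain ⟨γ, hU, hγs, hγ0, hγf, hveq⟩ := hpolopt t htK x hx
    rw [hvpi t htK x hx, hveq]
    have hfmem : ∀ s, f x (pol t x) s ∈ Z (t + 1) :=
      fun s => hfZ t htK x hx (pol t x) hU s
    have ihvals : ∀ s, vpi (t + 1) (f x (pol t x) s) ≤ vhat (t + 1) (f x (pol t x) s) := by
      intro s
      exact ih (t + 1) (by omega) (by omega) (f x (pol t x) s) (hfmem s)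
    have jens : ∀ s, vhat (t + 1) (f x (pol t x) s) ≤ ∑ i, γ s i * vhat (t + 1) (node i) := by
      intro s
      rw [hγf s]
      exact jensen_zero_outside (hvhatconv (t + 1) (by omega)) (γ s) (hγs s) node
        (fun i hwi => by_contra fun hni => hwi (hγ0 s i hni))
    have key : ∀ s, p s * vpi (t + 1) (f x (pol t x) s)
        ≤ ∑ i, p s * γ s i * vhat (t + 1) (node i) := by
      intro s
      calc p s * vpi (t + 1) (f x (pol t x) s)
          ≤ p s * (∑ i, γ s i * vhat (t + 1) (node i)) := by
            exact mul_le_mul_of_nonneg_left ((ihvals s).trans (jens s)) (hp s)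
        _ = ∑ i, p s * γ s i * vhat (t + 1) (node i) := by
            rw [Finset.mul_sum]; exact Finset.sum_congr rfl fun i _ => by ring
    exact add_le_add (le_refl _) (Finset.sum_le_sum fun s _ => key s)
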